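/- Let λ, τ be real numbers with 0 < τ < λ, k := τ/λ, θ⋆ := 2π − arcsin k, H⋆ := λ cos θ⋆ − τ θ⋆, h(θ) := λ cos θ − τ θ − H⋆, and let θ̂ be the unique zero of h in (θ⋆ − 2π, θ⋆). Suppose (θ, v) : I → ℝ² is a solution of θ' = v, v' = λ sin θ + τ on an interval I containing 0 with θ(0) ∈ (θ̂, θ⋆) and ½ v(0)² + λ cos θ(0) − τ θ(0) < H⋆. Then θ(t) ∈ (θ̂, θ⋆) for every t ∈ I; that is, orbits starting inside the homoclinic loop remain in the strip θ̂ < θ < θ⋆ for as long as they are defined (they are captured into resonance). -/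

import Mathlib

open Real Set

/-- If `(θ, v) : I → ℝ²` solves `θ' = v`, `v' = λ sin θ + τ` on
an interval `I` containing `0` with `θ(0) ∈ (θ̂, θ⋆)` and energy
`½v(0)² + λ cos θ(0) − τθ(0) < H⋆`, then `θ(t) ∈ (θ̂, θ⋆)` for every `t ∈ I`:
orbits starting inside the homoclinic loop remain in the strip `θ̂ < θ < θ⋆`
for as long as they are defined. -/
theorem stmt13 (lam tau k θs Hstar : ℝ) (htau : 0 < tau) (htl : tau < lam)
    (hk : k = tau / lam) (hθs : θs = 2 * Real.pi - Real.arcsin k)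
    (hH : Hstar = lam * Real.cos θs - tau * θs)
    (h : ℝ → ℝ)
    (hdef : ∀ θ, h θ = lam * Real.cos θ - tau * θ - Hstar)
    (θh : ℝ) (hmem : θh ∈ Set.Ioo (θs - 2 * Real.pi) θs) (hzero : h θh = 0)
    (I : Set ℝ) (hI : Convex ℝ I) (h0I : (0:ℝ) ∈ I)
    (θ v : ℝ → ℝ)
    (hsol : ∀ t ∈ I, HasDerivWithinAt θ (v t) I t ∧
      HasDerivWithinAt v (lam * Real.sin (θ t) + tau) I t)
    (hθ0 : θ 0 ∈ Set.Ioo θh θs)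
    (hE0 : (1/2) * (v 0)^2 + lam * Real.cos (θ 0) - tau * θ 0 < Hstar) :
    ∀ t ∈ I, θ t ∈ Set.Ioo θh θs := by
  set E : ℝ → ℝ := fun t => (1/2) * (v t)^2 + lam * Real.cos (θ t) - tau * θ t with hEdef
  have hE' : ∀ t ∈ I, HasDerivWithinAt E 0 I t := by
    intro t ht
    obtain ⟨hθ', hv'⟩ := hsol t ht
    have h1 : HasDerivWithinAt (fun s => (1/2 : ℝ) * (v s)^2)
        ((1/2) * ((2:ℕ) * v t ^ 1 * (lam * Real.sin (θ t) + tau))) I t :=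
      (hv'.pow 2).const_mul _
    have h2 : HasDerivWithinAt (fun s => lam * Real.cos (θ s))
        (lam * (-Real.sin (θ t) * v t)) I t :=
      ((Real.hasDerivAt_cos (θ t)).comp_hasDerivWithinAt t hθ').const_mul _
    have h3 : HasDerivWithinAt (fun s => tau * θ s) (tau * v t) I t := hθ'.const_mul _
    have h4 : HasDerivWithinAt E (1/2 * ((2:ℕ) * v t ^ 1 * (lam * Real.sin (θ t) + tau)) + lam * (-Real.sin (θ t) * v t) - tau * v t) I t := (h1.add h2).sub h3
    convert h4 using 1
    push_cast
    ring
  have hconst : ∀ t ∈ I, E t = E 0 := by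
    intro t ht
    have hb := hI.norm_image_sub_le_of_norm_hasDerivWithin_le
      (f := E) (f' := fun _ => (0:ℝ)) (C := 0) hE' (fun x _ => by simp) h0I ht
    have habs : |E t - E 0| ≤ 0 := by simpa using hb
    have := abs_nonpos_iff.mp habs
    linarith
  have hlt : ∀ t ∈ I, lam * Real.cos (θ t) - tau * θ t < Hstar := by
    intro t ht
    have h1 := hconst t ht
    simp only [hEdef] at h1
    have h3 : (0:ℝ) ≤ (1/2) * (v t)^2 := by positivity
    linarith
  have hne_s : ∀ t ∈ I, θ t ≠ θs := by
    intro t ht heq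
    have := hlt t ht
    rw [heq, hH] at this
    linarith
  have hne_h : ∀ t ∈ I, θ t ≠ θh := by
    intro t ht heq
    have h1 := hlt t ht
    have h2 : lam * Real.cos θh - tau * θh - Hstar = 0 := by rw [← hdef]; exact hzero
    rw [heq] at h1
    linarith
  have hcont : ContinuousOn θ I := fun t ht => (hsol t ht).1.continuousWithinAt
  have hconn : (θ '' I).OrdConnected :=
    (hI.isPreconnected.image θ hcont).ordConnected
  intro t ht
  obtain ⟨h0l, h0r⟩ := hθ0
  by_contra hcon
  rw [Set.mem_Ioo, not_and_or] at hcon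
  rcases hcon with hle | hge
  · push_neg at hle
    have hmem' : θh ∈ θ '' I := hconn.out (Set.mem_image_of_mem θ ht)
      (Set.mem_image_of_mem θ h0I) ⟨hle, le_of_lt h0l⟩
    obtain ⟨s, hs, hseq⟩ := hmem'
    exact hne_h s hs hseq
  · push_neg at hge
    have hmem' : θs ∈ θ '' I := hconn.out (Set.mem_image_of_mem θ h0I)
      (Set.mem_image_of_mem θ ht) ⟨le_of_lt h0r, hge⟩
    obtain ⟨s, hs, hseq⟩ := hmem'
    exact hne_s s hs hseq
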